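/- (Nagy's inequality) Let a_1, …, a_r be real numbers with maximum M and minimum m. Then the variance (1/r)∑(a_i − ā)², where ā = (1/r)∑ a_i, is at least (M − m)²/(2r). -/

import Mathlib

open Matrix BigOperators

noncomputable def frob {m n : ℕ} (A : Matrix (Fin m) (Fin n) ℝ) : ℝ :=
  Real.sqrt (∑ i, ∑ j, (A i j) ^ 2)

noncomputable def finner {m n : ℕ} (A B : Matrix (Fin m) (Fin n) ℝ) : ℝ :=
  (Bᵀ * A).trace

noncomputable def Rreg {r : ℕ} (S : Matrix (Fin r) (Fin r) ℝ) : ℝ :=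
  frob (Sᵀ * S - ((frob S) ^ 2 / (r : ℝ)) • 1)

noncomputable def sv {r : ℕ} (S : Matrix (Fin r) (Fin r) ℝ) (i : Fin r) : ℝ :=
  Real.sqrt ((Matrix.isHermitian_iff_isSymm.mpr (Matrix.isSymm_transpose_mul_self S)).eigenvalues i)

noncomputable def gradR {r : ℕ} (S : Matrix (Fin r) (Fin r) ℝ) : Matrix (Fin r) (Fin r) ℝ :=
  (2 / Rreg S) • (S * (Sᵀ * S - ((frob S) ^ 2 / (r : ℝ)) • 1))

theorem stmt7 {r : ℕ} (hr : 0 < r) (a : Fin r → ℝ) (M m : ℝ)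
    (hM : IsGreatest (Set.range a) M) (hm : IsLeast (Set.range a) m) :
    (M - m) ^ 2 / (2 * (r : ℝ))
      ≤ (1 / (r : ℝ)) * ∑ i, (a i - (1 / (r : ℝ)) * ∑ j, a j) ^ 2 := by
  obtain ⟨⟨i, hi⟩, hub⟩ := hM
  obtain ⟨⟨j, hj⟩, hlb⟩ := hm
  set μ := (1 / (r : ℝ)) * ∑ k, a k with hμ
  have hrpos : (0 : ℝ) < r := by exact_mod_cast hr
  by_cases hMm : M = m
  · have : (M - m) ^ 2 / (2 * (r : ℝ)) = 0 := by rw [hMm]; ring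
    rw [this]
    positivity
  · have hij : i ≠ j := by
      intro h; apply hMm; rw [← hi, ← hj, h]
    have hkey : (a i - μ) ^ 2 + (a j - μ) ^ 2 ≤ ∑ k, (a k - μ) ^ 2 := by
      have := Finset.sum_le_sum_of_subset_of_nonneg
        (Finset.subset_univ ({i, j} : Finset (Fin r)))
        (fun k _ _ => sq_nonneg (a k - μ))
      rwa [Finset.sum_pair hij] at this
    have h2 : (M - m) ^ 2 / 2 ≤ (a i - μ) ^ 2 + (a j - μ) ^ 2 := by
      rw [hi, hj]; nlinarith [sq_nonneg (M + m - 2 * μ)]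
    have h3 : (M - m) ^ 2 / 2 ≤ ∑ k, (a k - μ) ^ 2 := le_trans h2 hkey
    rw [div_le_iff₀ (by positivity : (0:ℝ) < 2 * (r:ℝ))]
    have : (1 / (r : ℝ) * ∑ k, (a k - μ) ^ 2) * (2 * r) = 2 * ∑ k, (a k - μ) ^ 2 := by
      field_simp
    nlinarith [h3]
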